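/- arXiv:1604.04423 — 2 statements merged into one kernel-verified Lean document; each statement's English description precedes it below -/
import Mathlib

section
/- For all natural numbers n ≥ 1 and r ≥ 1 there exists a constant C > 0 such that for all n-tuples g, h, X of real polynomials in n variables, each component having total degree at most r and zero constant coefficient, and with ⫴X⫴ ≤ 1, one has ⫴g ∘ X ∘ h⫴ ≤ C · max(1, ⫴g⫴) · max(1, ⫴h⫴)^(r²). -/
open MvPolynomial

/-- The coefficient norm of an `n`-tuple of real polynomials in `n` variables:
the supremum (= maximum) of the absolute values of all monomial coefficients
of all components. -/
noncomputable def coeffNorm {n : ℕ} (P : Fin n → MvPolynomial (Fin n) ℝ) : ℝ :=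
  ⨆ i : Fin n, ⨆ d : Fin n →₀ ℕ, |MvPolynomial.coeff d (P i)|

/-- The composition `Y ∘ X` of `n`-tuples of polynomials: substitute the
components of `X` for the variables in each component of `Y`. -/
noncomputable def polyComp {n : ℕ} (Y X : Fin n → MvPolynomial (Fin n) ℝ) :
    Fin n → MvPolynomial (Fin n) ℝ :=
  fun i => MvPolynomial.bind₁ X (Y i)

/-! ### Auxiliary `ℓ¹`-norm machinery -/

/-- The `ℓ¹` norm of a polynomial: sum of absolute values of coefficients. -/
noncomputable def polyL1 {n : ℕ} (p : MvPolynomial (Fin n) ℝ) : ℝ :=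
  ∑ d ∈ p.support, |MvPolynomial.coeff d p|

lemma polyL1_nonneg {n : ℕ} (p : MvPolynomial (Fin n) ℝ) : 0 ≤ polyL1 p :=
  Finset.sum_nonneg fun _ _ => abs_nonneg _

lemma polyL1_eq_of_subset {n : ℕ} {p : MvPolynomial (Fin n) ℝ} {s : Finset (Fin n →₀ ℕ)}
    (hs : p.support ⊆ s) : polyL1 p = ∑ d ∈ s, |MvPolynomial.coeff d p| := by
  refine Finset.sum_subset hs fun d _ hd => ?_
  rw [MvPolynomial.notMem_support_iff.mp hd, abs_zero]

lemma abs_coeff_le_polyL1 {n : ℕ} (p : MvPolynomial (Fin n) ℝ) (d : Fin n →₀ ℕ) :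
    |MvPolynomial.coeff d p| ≤ polyL1 p := by
  by_cases hd : d ∈ p.support
  · exact Finset.single_le_sum (f := fun e => |MvPolynomial.coeff e p|) (fun _ _ => abs_nonneg _) hd
  · rw [MvPolynomial.notMem_support_iff.mp hd, abs_zero]; exact polyL1_nonneg p

lemma polyL1_add_le {n : ℕ} (p q : MvPolynomial (Fin n) ℝ) :
    polyL1 (p + q) ≤ polyL1 p + polyL1 q := by
  classical
  rw [polyL1_eq_of_subset (s := p.support ∪ q.support) MvPolynomial.support_add,
    polyL1_eq_of_subset (s := p.support ∪ q.support) Finset.subset_union_left,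
    polyL1_eq_of_subset (s := p.support ∪ q.support) Finset.subset_union_right,
    ← Finset.sum_add_distrib]
  refine Finset.sum_le_sum fun d _ => ?_
  rw [MvPolynomial.coeff_add]
  exact abs_add_le _ _

lemma polyL1_zero {n : ℕ} : polyL1 (0 : MvPolynomial (Fin n) ℝ) = 0 := by
  simp [polyL1]

lemma polyL1_sum_le {n : ℕ} {ι : Type*} (s : Finset ι) (f : ι → MvPolynomial (Fin n) ℝ) :
    polyL1 (∑ i ∈ s, f i) ≤ ∑ i ∈ s, polyL1 (f i) := by
  classical
  induction s using Finset.cons_induction with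
  | empty => simp [polyL1_zero]
  | cons a s has ih =>
      rw [Finset.sum_cons, Finset.sum_cons]
      exact (polyL1_add_le _ _).trans (add_le_add le_rfl ih)

lemma polyL1_monomial_le {n : ℕ} (d : Fin n →₀ ℕ) (c : ℝ) :
    polyL1 (MvPolynomial.monomial d c) ≤ |c| := by
  classical
  by_cases hc : c = 0
  · simp [hc, polyL1_zero]
  · rw [polyL1, MvPolynomial.support_monomial, if_neg hc, Finset.sum_singleton,
      MvPolynomial.coeff_monomial, if_pos rfl]

lemma polyL1_mul_le {n : ℕ} (p q : MvPolynomial (Fin n) ℝ) :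
    polyL1 (p * q) ≤ polyL1 p * polyL1 q := by
  classical
  calc polyL1 (p * q)
      = polyL1 (∑ d ∈ p.support, ∑ e ∈ q.support,
          MvPolynomial.monomial (d + e) (MvPolynomial.coeff d p * MvPolynomial.coeff e q)) := by
        conv_lhs => rw [p.as_sum, q.as_sum]
        rw [Finset.sum_mul_sum]
        simp_rw [MvPolynomial.monomial_mul]
    _ ≤ ∑ d ∈ p.support, ∑ e ∈ q.support,
          |MvPolynomial.coeff d p * MvPolynomial.coeff e q| :=
        (polyL1_sum_le _ _).trans (Finset.sum_le_sum fun d _ =>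
          (polyL1_sum_le _ _).trans (Finset.sum_le_sum fun e _ => polyL1_monomial_le _ _))
    _ = polyL1 p * polyL1 q := by
        rw [polyL1, polyL1, Finset.sum_mul_sum]
        simp_rw [abs_mul]

lemma polyL1_one_le {n : ℕ} : polyL1 (1 : MvPolynomial (Fin n) ℝ) ≤ 1 := by
  have := polyL1_monomial_le (0 : Fin n →₀ ℕ) (1 : ℝ)
  simpa using this

lemma polyL1_pow_le {n : ℕ} (p : MvPolynomial (Fin n) ℝ) (k : ℕ) :
    polyL1 (p ^ k) ≤ polyL1 p ^ k := by
  induction k with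
  | zero => simpa using polyL1_one_le
  | succ k ih =>
      rw [pow_succ, pow_succ]
      exact (polyL1_mul_le _ _).trans
        (mul_le_mul ih le_rfl (polyL1_nonneg _) (pow_nonneg (polyL1_nonneg _) _))

lemma polyL1_prod_le {n : ℕ} {ι : Type*} (s : Finset ι) (f : ι → MvPolynomial (Fin n) ℝ) :
    polyL1 (∏ i ∈ s, f i) ≤ ∏ i ∈ s, polyL1 (f i) := by
  classical
  induction s using Finset.cons_induction with
  | empty => simpa using polyL1_one_le
  | cons a s has ih =>
      rw [Finset.prod_cons, Finset.prod_cons]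
      refine (polyL1_mul_le _ _).trans ?_
      exact mul_le_mul_of_nonneg_left ih (polyL1_nonneg _) |>.trans le_rfl

/-- Degree of a monomial as a sum over all variables. -/
lemma finsupp_sum_eq_sum_univ {n : ℕ} (d : Fin n →₀ ℕ) :
    (d.sum fun _ e => e) = ∑ i, d i :=
  Finsupp.sum_fintype _ _ fun _ => rfl

lemma polyL1_bind₁_le {n : ℕ} (X : Fin n → MvPolynomial (Fin n) ℝ)
    (p : MvPolynomial (Fin n) ℝ) (A : ℝ) (hA : 1 ≤ A) (hX : ∀ i, polyL1 (X i) ≤ A)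
    (D : ℕ) (hp : p.totalDegree ≤ D) :
    polyL1 (MvPolynomial.bind₁ X p) ≤ polyL1 p * A ^ D := by
  have hA0 : (0:ℝ) ≤ A := zero_le_one.trans hA
  rw [MvPolynomial.bind₁, MvPolynomial.aeval_def, MvPolynomial.eval₂_eq']
  refine (polyL1_sum_le _ _).trans ?_
  rw [polyL1, Finset.sum_mul]
  refine Finset.sum_le_sum fun d hd => ?_
  have h1 : polyL1 ((algebraMap ℝ (MvPolynomial (Fin n) ℝ)) (MvPolynomial.coeff d p))
      ≤ |MvPolynomial.coeff d p| := by
    rw [MvPolynomial.algebraMap_eq, MvPolynomial.C_apply]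
    exact polyL1_monomial_le _ _
  have h2 : polyL1 (∏ i, X i ^ d i) ≤ A ^ D := by
    refine (polyL1_prod_le _ _).trans ?_
    calc ∏ i, polyL1 (X i ^ d i) ≤ ∏ i, A ^ d i := by
          refine Finset.prod_le_prod (fun i _ => polyL1_nonneg _) fun i _ => ?_
          exact (polyL1_pow_le _ _).trans (pow_le_pow_left₀ (polyL1_nonneg _) (hX i) _)
      _ = A ^ (∑ i, d i) := Finset.prod_pow_eq_pow_sum _ _ _
      _ ≤ A ^ D := by
          refine pow_le_pow_right₀ hA ?_
          rw [← finsupp_sum_eq_sum_univ]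
          exact (MvPolynomial.le_totalDegree hd).trans hp
  exact (polyL1_mul_le _ _).trans
    (mul_le_mul h1 h2 (polyL1_nonneg _) (abs_nonneg _))

lemma totalDegree_bind₁_le {n : ℕ} (X : Fin n → MvPolynomial (Fin n) ℝ)
    (p : MvPolynomial (Fin n) ℝ) (r D : ℕ) (hX : ∀ i, (X i).totalDegree ≤ r)
    (hp : p.totalDegree ≤ D) :
    (MvPolynomial.bind₁ X p).totalDegree ≤ D * r := by
  rw [MvPolynomial.bind₁, MvPolynomial.aeval_def, MvPolynomial.eval₂_eq']
  refine (MvPolynomial.totalDegree_finset_sum _ _).trans (Finset.sup_le fun d hd => ?_)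
  refine (MvPolynomial.totalDegree_mul _ _).trans ?_
  rw [MvPolynomial.algebraMap_eq, MvPolynomial.totalDegree_C, zero_add]
  refine (MvPolynomial.totalDegree_finset_prod _ _).trans ?_
  calc ∑ i, (X i ^ d i).totalDegree ≤ ∑ i, d i * r :=
        Finset.sum_le_sum fun i _ =>
          (MvPolynomial.totalDegree_pow _ _).trans (Nat.mul_le_mul_left _ (hX i))
    _ = (∑ i, d i) * r := by rw [Finset.sum_mul]
    _ ≤ D * r := by
        refine Nat.mul_le_mul_right _ ?_
        rw [← finsupp_sum_eq_sum_univ]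
        exact (MvPolynomial.le_totalDegree hd).trans hp

lemma coeffNorm_nonneg {n : ℕ} (P : Fin n → MvPolynomial (Fin n) ℝ) : 0 ≤ coeffNorm P :=
  Real.iSup_nonneg fun _ => Real.iSup_nonneg fun _ => abs_nonneg _

lemma abs_coeff_le_coeffNorm {n : ℕ} (P : Fin n → MvPolynomial (Fin n) ℝ)
    (i : Fin n) (d : Fin n →₀ ℕ) : |MvPolynomial.coeff d (P i)| ≤ coeffNorm P := by
  have hbd : ∀ j : Fin n, BddAbove (Set.range fun e : Fin n →₀ ℕ => |MvPolynomial.coeff e (P j)|) :=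
    fun j => ⟨polyL1 (P j), by rintro x ⟨e, rfl⟩; exact abs_coeff_le_polyL1 _ _⟩
  unfold coeffNorm
  refine le_trans (le_ciSup (hbd i) d)
    (le_ciSup (f := fun j : Fin n => ⨆ e : Fin n →₀ ℕ, |MvPolynomial.coeff e (P j)|)
      ((Set.finite_range _).bddAbove) i)

lemma coeffNorm_le {n : ℕ} (P : Fin n → MvPolynomial (Fin n) ℝ) {B : ℝ} (hB : 0 ≤ B)
    (h : ∀ i d, |MvPolynomial.coeff d (P i)| ≤ B) : coeffNorm P ≤ B :=
  Real.iSup_le (fun i => Real.iSup_le (fun d => h i d) hB) hB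

/-- For `n ≥ 1`, `r ≥ 1` there is `C > 0` such that for all `n`-tuples
`g`, `h`, `X` of real polynomials in `n` variables, each component of total degree at
most `r` with zero constant coefficient, and with `⫴X⫴ ≤ 1`, one has
`⫴g ∘ X ∘ h⫴ ≤ C · max(1,⫴g⫴) · max(1,⫴h⫴)^(r²)`. -/
theorem coeffNorm_triple_comp_le (n r : ℕ) (hn : 1 ≤ n) (hr : 1 ≤ r) :
    ∃ C : ℝ, 0 < C ∧
      ∀ g h X : Fin n → MvPolynomial (Fin n) ℝ,
        (∀ i, (g i).totalDegree ≤ r) → (∀ i, MvPolynomial.constantCoeff (g i) = 0) →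
        (∀ i, (h i).totalDegree ≤ r) → (∀ i, MvPolynomial.constantCoeff (h i) = 0) →
        (∀ i, (X i).totalDegree ≤ r) → (∀ i, MvPolynomial.constantCoeff (X i) = 0) →
        coeffNorm X ≤ 1 →
        coeffNorm (polyComp (polyComp g X) h) ≤
          C * max 1 (coeffNorm g) * max 1 (coeffNorm h) ^ (r ^ 2) := by
  classical
  set c : Fin n →₀ ℕ := Finsupp.equivFunOnFinite.symm fun _ => r with hc
  set N : ℕ := (Finset.Iic c).card with hNdef
  have hN1 : 1 ≤ N := Finset.card_pos.mpr ⟨0, Finset.mem_Iic.mpr zero_le⟩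
  have hNR : (1:ℝ) ≤ (N:ℝ) := by exact_mod_cast hN1
  have hN0 : (0:ℝ) ≤ (N:ℝ) := by positivity
  refine ⟨(N:ℝ) ^ (r + 1) * (N:ℝ) ^ (r ^ 2), by positivity, ?_⟩
  intro g h X hg _ hh _ hX _ hXn
  set Mg := max 1 (coeffNorm g) with hMgdef
  set Mh := max 1 (coeffNorm h) with hMhdef
  have hMg1 : (1:ℝ) ≤ Mg := le_max_left _ _
  have hMh1 : (1:ℝ) ≤ Mh := le_max_left _ _
  have hMg0 : (0:ℝ) ≤ Mg := zero_le_one.trans hMg1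
  have hMh0 : (0:ℝ) ≤ Mh := zero_le_one.trans hMh1
  -- l1 bound from coeffNorm for tuples with components of total degree ≤ r
  have key : ∀ (P : Fin n → MvPolynomial (Fin n) ℝ), (∀ i, (P i).totalDegree ≤ r) →
      ∀ i, polyL1 (P i) ≤ (N:ℝ) * coeffNorm P := by
    intro P hP i
    have hsub : (P i).support ⊆ Finset.Iic c := by
      intro d hd
      rw [Finset.mem_Iic, Finsupp.le_def]
      intro j
      have h1 : d j ≤ ∑ k, d k :=
        Finset.single_le_sum (fun _ _ => Nat.zero_le _) (Finset.mem_univ j)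
      have h2 : (∑ k, d k) ≤ r := by
        rw [← finsupp_sum_eq_sum_univ]
        exact (MvPolynomial.le_totalDegree hd).trans (hP i)
      have h3 : c j = r := by simp [hc]
      omega
    rw [polyL1_eq_of_subset hsub]
    calc ∑ d ∈ Finset.Iic c, |MvPolynomial.coeff d (P i)|
        ≤ ∑ _d ∈ Finset.Iic c, coeffNorm P :=
          Finset.sum_le_sum fun d _ => abs_coeff_le_coeffNorm P i d
      _ = (N:ℝ) * coeffNorm P := by rw [Finset.sum_const, nsmul_eq_mul]
  have hXl1 : ∀ i, polyL1 (X i) ≤ (N:ℝ) := by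
    intro i
    refine (key X hX i).trans ?_
    calc (N:ℝ) * coeffNorm X ≤ (N:ℝ) * 1 := mul_le_mul_of_nonneg_left hXn hN0
      _ = (N:ℝ) := mul_one _
  set Q := polyComp g X with hQdef
  have hQl1 : ∀ i, polyL1 (Q i) ≤ (N:ℝ) ^ (r + 1) * Mg := by
    intro i
    have hgl1 : polyL1 (g i) ≤ (N:ℝ) * Mg :=
      (key g hg i).trans (mul_le_mul_of_nonneg_left (le_max_right _ _) hN0)
    calc polyL1 (Q i) ≤ polyL1 (g i) * (N:ℝ) ^ r :=
          polyL1_bind₁_le X (g i) (N:ℝ) hNR hXl1 r (hg i)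
      _ ≤ ((N:ℝ) * Mg) * (N:ℝ) ^ r :=
          mul_le_mul_of_nonneg_right hgl1 (by positivity)
      _ = (N:ℝ) ^ (r + 1) * Mg := by ring
  have hQdeg : ∀ i, (Q i).totalDegree ≤ r ^ 2 := by
    intro i
    have := totalDegree_bind₁_le X (g i) r r hX (hg i)
    simpa [pow_two, hQdef, polyComp] using this
  have hhl1 : ∀ j, polyL1 (h j) ≤ (N:ℝ) * Mh := fun j =>
    (key h hh j).trans (mul_le_mul_of_nonneg_left (le_max_right _ _) hN0)
  have hB1 : (1:ℝ) ≤ (N:ℝ) * Mh := by nlinarith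
  have hRl1 : ∀ i, polyL1 (polyComp Q h i) ≤
      (N:ℝ) ^ (r + 1) * (N:ℝ) ^ (r ^ 2) * Mg * Mh ^ (r ^ 2) := by
    intro i
    calc polyL1 (polyComp Q h i) ≤ polyL1 (Q i) * ((N:ℝ) * Mh) ^ (r ^ 2) :=
          polyL1_bind₁_le h (Q i) ((N:ℝ) * Mh) hB1 hhl1 (r ^ 2) (hQdeg i)
      _ ≤ ((N:ℝ) ^ (r + 1) * Mg) * ((N:ℝ) * Mh) ^ (r ^ 2) :=
          mul_le_mul_of_nonneg_right (hQl1 i) (by positivity)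
      _ = (N:ℝ) ^ (r + 1) * (N:ℝ) ^ (r ^ 2) * Mg * Mh ^ (r ^ 2) := by
          rw [mul_pow]; ring
  refine coeffNorm_le _ (by positivity) fun i d => ?_
  calc |MvPolynomial.coeff d (polyComp Q h i)| ≤ polyL1 (polyComp Q h i) :=
        abs_coeff_le_polyL1 _ _
    _ ≤ (N:ℝ) ^ (r + 1) * (N:ℝ) ^ (r ^ 2) * Mg * Mh ^ (r ^ 2) := hRl1 i
    _ = (N:ℝ) ^ (r + 1) * (N:ℝ) ^ (r ^ 2) * Mg * Mh ^ (r ^ 2) := rfl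
end

section
/- If X and Y are strictly subresonance polynomial self-maps of ℝ^n, then the composition (id + X) ∘ (id + Y) equals id + Z for some strictly subresonance polynomial self-map Z of ℝ^n; that is, the maps of the form identity plus a strictly subresonance polynomial self-map are closed under composition. -/
open MvPolynomial

/-- The minimum of the weights `w : Fin n → ℝ` (for `n ≥ 1`). -/
noncomputable def wmin {n : ℕ} (hn : 1 ≤ n) (w : Fin n → ℝ) : ℝ :=
  Finset.univ.inf' (Finset.univ_nonempty_iff.mpr ⟨⟨0, hn⟩⟩) w

/-- The maximum of the weights `w : Fin n → ℝ` (for `n ≥ 1`). -/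
noncomputable def wmax {n : ℕ} (hn : 1 ≤ n) (w : Fin n → ℝ) : ℝ :=
  Finset.univ.sup' (Finset.univ_nonempty_iff.mpr ⟨⟨0, hn⟩⟩) w

/-- The defect of the monomial with exponent multi-index `d` occurring in the
`i`-th component: `w i − Σ_j (d j)·(w j)`. -/
noncomputable def defect {n : ℕ} (w : Fin n → ℝ) (i : Fin n) (d : Fin n →₀ ℕ) : ℝ :=
  w i - ∑ j, (d j : ℝ) * w j

/-- An `n`-tuple of polynomials with zero constant coefficients
(a polynomial self-map of `ℝ^n`). -/
def IsPolySelfMap {n : ℕ} (P : Fin n → MvPolynomial (Fin n) ℝ) : Prop :=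
  ∀ i, MvPolynomial.constantCoeff (P i) = 0

/-- `P` is strictly subresonance: every monomial occurring with nonzero
coefficient in each component has defect `≤ wmax`. -/
def StrictSubresonanceDefects {n : ℕ} (hn : 1 ≤ n) (w : Fin n → ℝ)
    (P : Fin n → MvPolynomial (Fin n) ℝ) : Prop :=
  ∀ i, ∀ d ∈ (P i).support, defect w i d ≤ wmax hn w

section Aux
variable {n : ℕ} (w : Fin n → ℝ)

noncomputable def phiW (d : Fin n →₀ ℕ) : ℝ := ∑ j, (d j : ℝ) * w j

lemma phiW_add (a b : Fin n →₀ ℕ) : phiW w (a + b) = phiW w a + phiW w b := by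
  simp [phiW, Finsupp.add_apply, add_mul, Finset.sum_add_distrib]

lemma phiW_zero : phiW w 0 = 0 := by simp [phiW]

lemma lb_mul {p q : MvPolynomial (Fin n) ℝ} {a b : ℝ}
    (hp : ∀ e ∈ p.support, a ≤ phiW w e) (hq : ∀ e ∈ q.support, b ≤ phiW w e) :
    ∀ e ∈ (p * q).support, a + b ≤ phiW w e := by
  classical
  intro e he
  have := MvPolynomial.support_mul p q he
  rw [Finset.mem_add] at this
  obtain ⟨u, hu, v, hv, rfl⟩ := this
  rw [phiW_add]
  exact add_le_add (hp u hu) (hq v hv)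

lemma lb_pow {p : MvPolynomial (Fin n) ℝ} {a : ℝ}
    (hp : ∀ e ∈ p.support, a ≤ phiW w e) :
    ∀ k : ℕ, ∀ e ∈ (p ^ k).support, (k : ℝ) * a ≤ phiW w e := by
  intro k
  induction k with
  | zero =>
    intro e he
    rw [pow_zero] at he
    simp only [MvPolynomial.mem_support_iff, MvPolynomial.coeff_one, ne_eq,
      ite_eq_right_iff, not_forall] at he
    obtain ⟨rfl, -⟩ := he
    simp [phiW_zero]
  | succ k ih =>
    intro e he
    rw [pow_succ] at he
    have := lb_mul w ih hp e he
    push_cast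
    linarith

lemma lb_prod (s : Finset (Fin n)) (g : Fin n → MvPolynomial (Fin n) ℝ) (c : Fin n → ℝ)
    (h : ∀ j ∈ s, ∀ e ∈ (g j).support, c j ≤ phiW w e) :
    ∀ e ∈ (∏ j ∈ s, g j).support, (∑ j ∈ s, c j) ≤ phiW w e := by
  classical
  induction s using Finset.induction with
  | empty =>
    intro e he
    rw [Finset.prod_empty] at he
    simp only [MvPolynomial.mem_support_iff, MvPolynomial.coeff_one, ne_eq,
      ite_eq_right_iff, not_forall] at he
    obtain ⟨rfl, -⟩ := he
    simp [phiW_zero]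
  | @insert j s hj ih =>
    intro e he
    rw [Finset.prod_insert hj] at he
    rw [Finset.sum_insert hj]
    exact lb_mul w (h j (Finset.mem_insert_self j s))
      (ih fun j' hj' => h j' (Finset.mem_insert_of_mem hj')) e he

lemma lb_bind (f : Fin n → MvPolynomial (Fin n) ℝ)
    (hf : ∀ j, ∀ e ∈ (f j).support, w j ≤ phiW w e)
    (p : MvPolynomial (Fin n) ℝ) :
    ∀ e ∈ (MvPolynomial.bind₁ f p).support, ∃ d ∈ p.support, phiW w d ≤ phiW w e := by
  classical
  intro e he
  conv at he => rw [p.as_sum, map_sum]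
  obtain ⟨d, hd, he'⟩ := Finset.mem_biUnion.mp (MvPolynomial.support_sum he)
  refine ⟨d, hd, ?_⟩
  rw [MvPolynomial.bind₁_monomial] at he'
  rw [← MvPolynomial.smul_eq_C_mul] at he'
  have he'' := MvPolynomial.support_smul he'
  have key := lb_prod w d.support (fun j => f j ^ d j) (fun j => (d j : ℝ) * w j)
    (fun j _ => lb_pow w (hf j) (d j)) e he''
  calc phiW w d = ∑ j ∈ d.support, (d j : ℝ) * w j := by
        rw [phiW]
        refine (Finset.sum_subset (Finset.subset_univ _) ?_).symm
        intro j _ hj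
        simp [Finsupp.notMem_support_iff.mp hj]
    _ ≤ phiW w e := key

end Aux

/-- If `A` and `B` are strictly subresonance polynomial self-maps of
`ℝ^n`, then the composition `(id + A) ∘ (id + B)` equals `id + Z` for some strictly
subresonance polynomial self-map `Z` of `ℝ^n`. -/
theorem id_add_strict_subresonance_comp (n : ℕ) (hn : 1 ≤ n) (w : Fin n → ℝ)
    (hw : ∀ j, w j < 0) (A B : Fin n → MvPolynomial (Fin n) ℝ)
    (hA0 : IsPolySelfMap A) (hA : StrictSubresonanceDefects hn w A)
    (hB0 : IsPolySelfMap B) (hB : StrictSubresonanceDefects hn w B) :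
    ∃ Z : Fin n → MvPolynomial (Fin n) ℝ,
      IsPolySelfMap Z ∧ StrictSubresonanceDefects hn w Z ∧
      ∀ i, MvPolynomial.bind₁ (fun j => MvPolynomial.X j + B j)
            (MvPolynomial.X i + A i) = MvPolynomial.X i + Z i := by
  classical
  set f : Fin n → MvPolynomial (Fin n) ℝ := fun j => MvPolynomial.X j + B j with hf_def
  have hwmax : wmax hn w < 0 := by
    rw [wmax]
    exact (Finset.sup'_lt_iff _).mpr fun j _ => hw j
  -- defect in terms of phiW
  have hdef : ∀ i d, defect w i d = w i - phiW w d := fun i d => rfl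
  have hf : ∀ j, ∀ e ∈ (f j).support, w j ≤ phiW w e := by
    intro j e he
    have := MvPolynomial.support_add he
    rw [Finset.mem_union] at this
    rcases this with h | h
    · rw [MvPolynomial.support_X] at h
      rw [Finset.mem_singleton] at h
      subst h
      rw [phiW]
      rw [Finset.sum_eq_single j]
      · simp
      · intro b _ hb
        simp [Finsupp.single_apply, Ne.symm hb]
      · simp
    · have := hB j e h
      rw [hdef] at this
      linarith
  refine ⟨fun i => B i + MvPolynomial.bind₁ f (A i), ?_, ?_, ?_⟩
  · intro i
    rw [map_add, hB0 i, zero_add]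
    have h1 : MvPolynomial.constantCoeff (MvPolynomial.bind₁ f (A i))
        = MvPolynomial.aeval (0 : Fin n → ℝ) (MvPolynomial.bind₁ f (A i)) := by
      rw [MvPolynomial.aeval_zero]
      simp
    rw [h1, MvPolynomial.aeval_bind₁]
    have h2 : (fun j => MvPolynomial.aeval (0 : Fin n → ℝ) (f j)) = (0 : Fin n → ℝ) := by
      funext j
      rw [MvPolynomial.aeval_zero]
      simp only [hf_def, map_add, MvPolynomial.constantCoeff_X, hB0 j, add_zero]
      simp
    rw [h2, MvPolynomial.aeval_zero]
    simp [hA0 i]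
  · intro i e he
    have := MvPolynomial.support_add he
    rw [Finset.mem_union] at this
    rcases this with h | h
    · exact hB i e h
    · obtain ⟨d, hd, hde⟩ := lb_bind w f hf (A i) e h
      have := hA i d hd
      rw [hdef] at this ⊢
      linarith
  · intro i
    rw [map_add, MvPolynomial.bind₁_X_right]
    show MvPolynomial.X i + B i + _ = _
    ring
end
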